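/- Let λ > 0, c > 1 and c̄ = (c+1)/(c−1), and suppose λ/n ≥ c·‖∇Λ(η₀)‖_∞. Let κ > 0 satisfy κ·‖δ_T‖ ≤ ‖√w_i·x_i'δ‖_{2,n} for every δ ∈ Δ_c̄ (weighted restricted eigenvalue), and let q̄ > 0 satisfy q̄·(1/n)∑_{i=1}^n w_i·|x_i'δ|³ ≤ ((1/n)∑_{i=1}^n w_i·(x_i'δ)²)^{3/2} for every δ ∈ Δ_c̄, with q̄ > 3·(1+1/c)·λ·√s/(n·κ). Then every global minimizer η̂ of η ↦ Λ(η) + (λ/n)·‖η‖₁ satisfies ‖√w_i·x_i'(η̂ − η₀)‖_{2,n} ≤ 3·(1+1/c)·λ·√s/(n·κ) and ‖η̂ − η₀‖₁ ≤ 3·((1+c)·(1+c̄)/c)·λ·s/(n·κ²). -/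

import Mathlib

open Finset

/-- The logistic link function `G(t) = exp t / (1 + exp t)`. -/
noncomputable def logistic (t : ℝ) : ℝ := Real.exp t / (1 + Real.exp t)

/-- Inner product `x_i'η` of the `i`-th design vector with `η`. -/
def xdot {n p : ℕ} (x : Fin n → Fin p → ℝ) (η : Fin p → ℝ) (i : Fin n) : ℝ :=
  ∑ j, x i j * η j

/-- Average logistic negative log-likelihood
`Λ(η) = (1/n)∑ᵢ [log(1+exp(x_i'η)) − y_i·(x_i'η)]`. -/
noncomputable def Lam {n p : ℕ} (x : Fin n → Fin p → ℝ) (y : Fin n → ℝ)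
    (η : Fin p → ℝ) : ℝ :=
  (1 / (n : ℝ)) * ∑ i, (Real.log (1 + Real.exp (xdot x η i)) - y i * xdot x η i)

/-- Gradient of `Λ`: `∇Λ(η) = (1/n)∑ᵢ (G(x_i'η) − y_i)·x_i`. -/
noncomputable def gradLam {n p : ℕ} (x : Fin n → Fin p → ℝ) (y : Fin n → ℝ)
    (η : Fin p → ℝ) (j : Fin p) : ℝ :=
  (1 / (n : ℝ)) * ∑ i, (logistic (xdot x η i) - y i) * x i j

/-- Sup-norm `‖∇Λ(η)‖_∞` of the gradient of `Λ`. -/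
noncomputable def gradLamSup {n p : ℕ} (x : Fin n → Fin p → ℝ) (y : Fin n → ℝ)
    (η : Fin p → ℝ) : ℝ :=
  ⨆ j : Fin p, |gradLam x y η j|

/-- The logistic weights `w_i = G(x_i'η₀)·(1 − G(x_i'η₀))`. -/
noncomputable def wgt {n p : ℕ} (x : Fin n → Fin p → ℝ) (η₀ : Fin p → ℝ) (i : Fin n) : ℝ :=
  logistic (xdot x η₀ i) * (1 - logistic (xdot x η₀ i))

/-- Weighted prediction norm `‖√w_i·x_i'δ‖_{2,n} = ((1/n)∑ᵢ w_i (x_i'δ)²)^{1/2}`. -/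
noncomputable def predNorm {n p : ℕ} (x : Fin n → Fin p → ℝ) (w : Fin n → ℝ)
    (δ : Fin p → ℝ) : ℝ :=
  Real.sqrt ((1 / (n : ℝ)) * ∑ i, w i * xdot x δ i ^ 2)

/-- Support of a coefficient vector. -/
noncomputable def supp {p : ℕ} (η : Fin p → ℝ) : Finset (Fin p) :=
  Finset.univ.filter (fun j => η j ≠ 0)

/-- ℓ1 norm of a vector in `ℝ^p`. -/
def l1norm {p : ℕ} (δ : Fin p → ℝ) : ℝ := ∑ j, |δ j|

/-- The restricted cone `Δ_c̄ = {δ : ‖δ_{T^c}‖₁ ≤ c̄·‖δ_T‖₁}` for a support set `T`. -/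
noncomputable def inCone {p : ℕ} (T : Finset (Fin p)) (cbar : ℝ) (δ : Fin p → ℝ) : Prop :=
  ∑ j ∈ Tᶜ, |δ j| ≤ cbar * ∑ j ∈ T, |δ j|

namespace LassoAux

noncomputable def wfun (t : ℝ) : ℝ := logistic t * (1 - logistic t)

lemma one_add_exp_pos (t : ℝ) : 0 < 1 + Real.exp t := by positivity

lemma logistic_pos (t : ℝ) : 0 < logistic t :=
  div_pos (Real.exp_pos t) (one_add_exp_pos t)

lemma logistic_lt_one (t : ℝ) : logistic t < 1 := by
  rw [logistic, div_lt_one (one_add_exp_pos t)]; linarith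

lemma wfun_nonneg (t : ℝ) : 0 ≤ wfun t :=
  mul_nonneg (logistic_pos t).le (by linarith [logistic_lt_one t])

lemma wfun_eq (t : ℝ) : wfun t = Real.exp t / (1 + Real.exp t) ^ 2 := by
  have h := (one_add_exp_pos t).ne'
  rw [wfun, logistic]; field_simp; ring

lemma hasDerivAt_ell (t : ℝ) :
    HasDerivAt (fun u => Real.log (1 + Real.exp u)) (logistic t) t := by
  have h : HasDerivAt (fun u => 1 + Real.exp u) (Real.exp t) t :=
    (Real.hasDerivAt_exp t).const_add 1
  simpa [logistic] using h.log (one_add_exp_pos t).ne'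

lemma hasDerivAt_logistic (t : ℝ) : HasDerivAt logistic (wfun t) t := by
  have h1 : HasDerivAt (fun u => 1 + Real.exp u) (Real.exp t) t :=
    (Real.hasDerivAt_exp t).const_add 1
  have h := (Real.hasDerivAt_exp t).div h1 (one_add_exp_pos t).ne'
  have he : (Real.exp t * (1 + Real.exp t) - Real.exp t * Real.exp t) / (1 + Real.exp t) ^ 2
      = wfun t := by
    rw [wfun_eq]; field_simp; ring
  exact he ▸ h

lemma wfun_ratio (a t : ℝ) : wfun a * Real.exp (-|t|) ≤ wfun (a + t) := by
  have hE := Real.exp_pos a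
  have hF := Real.exp_pos t
  set E := Real.exp a with hEdef
  set F := Real.exp t with hFdef
  rw [wfun_eq, wfun_eq, Real.exp_add, ← hEdef, ← hFdef]
  rcases le_total 0 t with ht | ht
  · rw [abs_of_nonneg ht]
    set G := Real.exp (-t) with hGdef
    have hG : 0 < G := Real.exp_pos _
    have hinv : G * F = 1 := by
      rw [hGdef, hFdef, ← Real.exp_add]; simp
    have hF1 : 1 ≤ F := Real.one_le_exp ht
    rw [div_mul_eq_mul_div, div_le_div_iff₀ (by positivity) (by positivity)]
    have key : (1 + E * F) ^ 2 ≤ (F * (1 + E)) ^ 2 := by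
      nlinarith [mul_nonneg (sub_nonneg.mpr hF1)
        (by positivity : (0:ℝ) ≤ F * (1 + E) + (1 + E * F))]
    have h2 := mul_le_mul_of_nonneg_left key (mul_nonneg hE.le hG.le)
    have heq : E * G * (F * (1 + E)) ^ 2 = E * F * (1 + E) ^ 2 := by
      linear_combination E * F * (1 + E) ^ 2 * hinv
    linarith [h2, heq.le, heq.ge]
  · rw [abs_of_nonpos ht, neg_neg, ← hFdef]
    have hF1 : F ≤ 1 := Real.exp_le_one_iff.mpr ht
    rw [div_mul_eq_mul_div, div_le_div_iff₀ (by positivity) (by positivity)]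
    have key : (1 + E * F) ^ 2 ≤ (1 + E) ^ 2 := by
      nlinarith [mul_nonneg (mul_nonneg hE.le (sub_nonneg.mpr hF1))
        (by positivity : (0:ℝ) ≤ 2 + E + E * F)]
    exact mul_le_mul_of_nonneg_left key (by positivity)

lemma wfun_lb_pos (a u : ℝ) (hu : 0 ≤ u) : wfun a * (1 - u) ≤ wfun (a + u) := by
  refine le_trans ?_ (wfun_ratio a u)
  have h : 1 - u ≤ Real.exp (-|u|) := by
    rw [abs_of_nonneg hu]
    linarith [Real.add_one_le_exp (-u)]
  exact mul_le_mul_of_nonneg_left h (wfun_nonneg a)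

lemma wfun_lb_neg (a u : ℝ) (hu : u ≤ 0) : wfun a * (1 + u) ≤ wfun (a + u) := by
  refine le_trans ?_ (wfun_ratio a u)
  have h : 1 + u ≤ Real.exp (-|u|) := by
    rw [abs_of_nonpos hu, neg_neg]
    linarith [Real.add_one_le_exp u]
  exact mul_le_mul_of_nonneg_left h (wfun_nonneg a)

/-- generic monotonicity from pointwise derivatives -/
lemma monoOn_of_deriv {f f' : ℝ → ℝ} (hf : ∀ u, HasDerivAt f (f' u) u)
    {s : Set ℝ} (hs : Convex ℝ s) (h : ∀ u ∈ interior s, 0 ≤ f' u) :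
    MonotoneOn f s :=
  monotoneOn_of_hasDerivWithinAt_nonneg hs
    (fun u _ => (hf u).continuousAt.continuousWithinAt)
    (fun u hu => (hf u).hasDerivWithinAt.mono interior_subset) h

lemma nonneg_Ici {f f' : ℝ → ℝ} (hf : ∀ u, HasDerivAt f (f' u) u)
    (h0 : f 0 = 0) (h : ∀ u, 0 < u → 0 ≤ f' u) {t : ℝ} (ht : 0 ≤ t) : 0 ≤ f t := by
  have := monoOn_of_deriv hf (convex_Ici 0)
    (by rw [interior_Ici]; exact fun u hu => h u hu)
  have h2 := this (Set.self_mem_Ici) (Set.mem_Ici.mpr ht) ht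
  rwa [h0] at h2

lemma nonpos_Iic {f f' : ℝ → ℝ} (hf : ∀ u, HasDerivAt f (f' u) u)
    (h0 : f 0 = 0) (h : ∀ u, u < 0 → 0 ≤ f' u) {t : ℝ} (ht : t ≤ 0) : f t ≤ 0 := by
  have := monoOn_of_deriv hf (convex_Iic 0)
    (by rw [interior_Iic]; exact fun u hu => h u hu)
  have h2 := this (Set.mem_Iic.mpr ht) (Set.self_mem_Iic) ht
  rwa [h0] at h2

lemma nonneg_Iic {f f' : ℝ → ℝ} (hf : ∀ u, HasDerivAt f (f' u) u)
    (h0 : f 0 = 0) (h : ∀ u, u < 0 → f' u ≤ 0) {t : ℝ} (ht : t ≤ 0) : 0 ≤ f t := by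
  have : AntitoneOn f (Set.Iic 0) :=
    antitoneOn_of_hasDerivWithinAt_nonpos (convex_Iic 0)
      (fun u _ => (hf u).continuousAt.continuousWithinAt)
      (fun u hu => (hf u).hasDerivWithinAt.mono interior_subset)
      (by rw [interior_Iic]; exact fun u hu => h u hu)
  have h2 := this (Set.mem_Iic.mpr ht) (Set.self_mem_Iic) ht
  rwa [h0] at h2

lemma hasDerivAt_ell_shift (a u : ℝ) :
    HasDerivAt (fun v => Real.log (1 + Real.exp (a + v))) (logistic (a + u)) u := by
  have h1 : HasDerivAt (fun v : ℝ => a + v) 1 u := (hasDerivAt_id u).const_add a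
  simpa [Function.comp_def] using (hasDerivAt_ell (a + u)).comp u h1

lemma hasDerivAt_logistic_shift (a u : ℝ) :
    HasDerivAt (fun v => logistic (a + v)) (wfun (a + u)) u := by
  have h1 : HasDerivAt (fun v : ℝ => a + v) 1 u := (hasDerivAt_id u).const_add a
  simpa [Function.comp_def] using (hasDerivAt_logistic (a + u)).comp u h1

/-- gradient inequality: `ℓ(a+t) − ℓ(a) ≥ G(a)·t` -/
lemma grad_ineq (a t : ℝ) :
    logistic a * t ≤ Real.log (1 + Real.exp (a + t)) - Real.log (1 + Real.exp a) := by
  have hmono : Monotone logistic :=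
    monotone_of_hasDerivAt_nonneg hasDerivAt_logistic wfun_nonneg
  set F : ℝ → ℝ := fun u =>
    Real.log (1 + Real.exp (a + u)) - Real.log (1 + Real.exp a) - logistic a * u with hF
  have hF' : ∀ u, HasDerivAt F (logistic (a + u) - logistic a) u := by
    intro u
    have := ((hasDerivAt_ell_shift a u).sub_const (Real.log (1 + Real.exp a))).sub
      ((hasDerivAt_id u).const_mul (logistic a))
    simpa [hF, mul_comm, Pi.sub_def] using this
  have h0 : F 0 = 0 := by simp [hF]
  have hge : 0 ≤ F t := by
    rcases le_total 0 t with ht | ht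
    · exact nonneg_Ici hF' h0
        (fun u hu => sub_nonneg.mpr (hmono (by linarith))) ht
    · exact nonneg_Iic hF' h0
        (fun u hu => sub_nonpos.mpr (hmono (by linarith))) ht
  simp only [hF] at hge; linarith

/-- three-point convexity of `ℓ` -/
lemma ell_convex (s₀ s₁ a : ℝ) (ha : 0 ≤ a) (ha1 : a ≤ 1) :
    Real.log (1 + Real.exp ((1 - a) * s₀ + a * s₁))
      ≤ (1 - a) * Real.log (1 + Real.exp s₀) + a * Real.log (1 + Real.exp s₁) := by
  set m := (1 - a) * s₀ + a * s₁ with hm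
  have h0 := grad_ineq m (s₀ - m)
  have h1 := grad_ineq m (s₁ - m)
  rw [add_sub_cancel] at h0 h1
  have h0' := mul_le_mul_of_nonneg_left h0 (by linarith : (0:ℝ) ≤ 1 - a)
  have h1' := mul_le_mul_of_nonneg_left h1 ha
  have hz : logistic m * ((1 - a) * (s₀ - m) + a * (s₁ - m)) = 0 := by rw [hm]; ring
  nlinarith [h0', h1', hz]

/-- key second-order lower bound with cubic remainder -/
lemma key_ineq (a t : ℝ) :
    wfun a * (t ^ 2 / 2 - |t| ^ 3 / 6)
      ≤ Real.log (1 + Real.exp (a + t)) - Real.log (1 + Real.exp a) - logistic a * t := by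
  rcases le_total 0 t with ht | ht
  · rw [abs_of_nonneg ht]
    set G1 : ℝ → ℝ := fun u =>
      logistic (a + u) - logistic a - wfun a * (u - u ^ 2 / 2) with hG1
    have hG1' : ∀ u, HasDerivAt G1 (wfun (a + u) - wfun a * (1 - u)) u := by
      intro u
      have hpoly : HasDerivAt (fun u : ℝ => wfun a * (u - u ^ 2 / 2)) (wfun a * (1 - u)) u := by
        have := ((hasDerivAt_id u).sub ((hasDerivAt_pow 2 u).div_const 2)).const_mul (wfun a)
        exact this.congr_deriv (by push_cast; ring)
      have := ((hasDerivAt_logistic_shift a u).sub_const (logistic a)).sub hpoly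
      simpa [hG1, Pi.sub_def] using this
    have hG1nonneg : ∀ u, 0 ≤ u → 0 ≤ G1 u := by
      intro u hu
      exact nonneg_Ici hG1' (by simp [hG1])
        (fun v hv => sub_nonneg.mpr (wfun_lb_pos a v hv.le)) hu
    set F : ℝ → ℝ := fun u =>
      Real.log (1 + Real.exp (a + u)) - Real.log (1 + Real.exp a) - logistic a * u
        - wfun a * (u ^ 2 / 2 - u ^ 3 / 6) with hFd
    have hF' : ∀ u, HasDerivAt F (G1 u) u := by
      intro u
      have hpoly : HasDerivAt (fun u : ℝ => wfun a * (u ^ 2 / 2 - u ^ 3 / 6))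
          (wfun a * (u - u ^ 2 / 2)) u := by
        have := (((hasDerivAt_pow 2 u).div_const 2).sub
          ((hasDerivAt_pow 3 u).div_const 6)).const_mul (wfun a)
        exact this.congr_deriv (by push_cast; ring)
      have := (((hasDerivAt_ell_shift a u).sub_const (Real.log (1 + Real.exp a))).sub
        ((hasDerivAt_id u).const_mul (logistic a))).sub hpoly
      simpa [hFd, hG1, mul_comm, Pi.sub_def] using this
    have := nonneg_Ici hF' (by simp [hFd]) (fun u hu => hG1nonneg u hu.le) ht
    simp only [hFd] at this; linarith
  · rw [abs_of_nonpos ht]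
    set G1 : ℝ → ℝ := fun u =>
      logistic (a + u) - logistic a - wfun a * (u + u ^ 2 / 2) with hG1
    have hG1' : ∀ u, HasDerivAt G1 (wfun (a + u) - wfun a * (1 + u)) u := by
      intro u
      have hpoly : HasDerivAt (fun u : ℝ => wfun a * (u + u ^ 2 / 2)) (wfun a * (1 + u)) u := by
        have := ((hasDerivAt_id u).add ((hasDerivAt_pow 2 u).div_const 2)).const_mul (wfun a)
        exact this.congr_deriv (by push_cast; ring)
      have := ((hasDerivAt_logistic_shift a u).sub_const (logistic a)).sub hpoly
      simpa [hG1, Pi.sub_def] using this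
    have hG1nonpos : ∀ u, u ≤ 0 → G1 u ≤ 0 := by
      intro u hu
      exact nonpos_Iic hG1' (by simp [hG1])
        (fun v hv => sub_nonneg.mpr (wfun_lb_neg a v hv.le)) hu
    set F : ℝ → ℝ := fun u =>
      Real.log (1 + Real.exp (a + u)) - Real.log (1 + Real.exp a) - logistic a * u
        - wfun a * (u ^ 2 / 2 + u ^ 3 / 6) with hFd
    have hF' : ∀ u, HasDerivAt F (G1 u) u := by
      intro u
      have hpoly : HasDerivAt (fun u : ℝ => wfun a * (u ^ 2 / 2 + u ^ 3 / 6))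
          (wfun a * (u + u ^ 2 / 2)) u := by
        have := (((hasDerivAt_pow 2 u).div_const 2).add
          ((hasDerivAt_pow 3 u).div_const 6)).const_mul (wfun a)
        exact this.congr_deriv (by push_cast; ring)
      have := (((hasDerivAt_ell_shift a u).sub_const (Real.log (1 + Real.exp a))).sub
        ((hasDerivAt_id u).const_mul (logistic a))).sub hpoly
      simpa [hFd, hG1, mul_comm, Pi.sub_def] using this
    have := nonneg_Iic hF' (by simp [hFd]) (fun u hu => hG1nonpos u hu.le) ht
    simp only [hFd] at this
    have hcube : (-t) ^ 3 = -(t ^ 3) := by ring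
    rw [hcube]; linarith


section Sums

variable {n p : ℕ} (x : Fin n → Fin p → ℝ) (y : Fin n → ℝ)

lemma xdot_add (η δ : Fin p → ℝ) (i : Fin n) :
    xdot x (η + δ) i = xdot x η i + xdot x δ i := by
  simp [xdot, mul_add, Finset.sum_add_distrib]

lemma xdot_smul (a : ℝ) (δ : Fin p → ℝ) (i : Fin n) :
    xdot x (a • δ) i = a * xdot x δ i := by
  simp [xdot, Finset.mul_sum]; exact Finset.sum_congr rfl fun j _ => by ring

lemma xdot_combo (a : ℝ) (η ζ : Fin p → ℝ) (i : Fin n) :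
    xdot x ((1 - a) • η + a • ζ) i = (1 - a) * xdot x η i + a * xdot x ζ i := by
  rw [xdot_add, xdot_smul, xdot_smul]

lemma wgt_eq (η₀ : Fin p → ℝ) (i : Fin n) : wgt x η₀ i = wfun (xdot x η₀ i) := rfl

lemma grad_dot (η₀ δ : Fin p → ℝ) :
    ∑ j, gradLam x y η₀ j * δ j
      = (1 / (n : ℝ)) * ∑ i, (logistic (xdot x η₀ i) - y i) * xdot x δ i := by
  simp only [gradLam, xdot, Finset.sum_mul, Finset.mul_sum]
  rw [Finset.sum_comm]
  exact Finset.sum_congr rfl fun i _ => Finset.sum_congr rfl fun j _ => by ring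

lemma lam_lower_key (η₀ δ : Fin p → ℝ) :
    (1 / (n : ℝ)) * ∑ i, wgt x η₀ i * ((xdot x δ i) ^ 2 / 2 - |xdot x δ i| ^ 3 / 6)
      ≤ Lam x y (η₀ + δ) - Lam x y η₀ - ∑ j, gradLam x y η₀ j * δ j := by
  rw [grad_dot, Lam, Lam, ← mul_sub, ← mul_sub, ← Finset.sum_sub_distrib,
    ← Finset.sum_sub_distrib]
  refine mul_le_mul_of_nonneg_left (Finset.sum_le_sum fun i _ => ?_) (by positivity)
  rw [xdot_add, wgt_eq]
  have h := key_ineq (xdot x η₀ i) (xdot x δ i)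
  nlinarith [h]

lemma lam_lower_grad (η₀ δ : Fin p → ℝ) :
    ∑ j, gradLam x y η₀ j * δ j ≤ Lam x y (η₀ + δ) - Lam x y η₀ := by
  rw [grad_dot, Lam, Lam, ← mul_sub, ← Finset.sum_sub_distrib]
  refine mul_le_mul_of_nonneg_left (Finset.sum_le_sum fun i _ => ?_) (by positivity)
  rw [xdot_add]
  have h := grad_ineq (xdot x η₀ i) (xdot x δ i)
  nlinarith [h]

lemma lam_convex (η ζ : Fin p → ℝ) (a : ℝ) (ha : 0 ≤ a) (ha1 : a ≤ 1) :
    Lam x y ((1 - a) • η + a • ζ) ≤ (1 - a) * Lam x y η + a * Lam x y ζ := by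
  rw [Lam, Lam, Lam]
  have hr : (1 - a) * ((1 / (n : ℝ)) * ∑ i, (Real.log (1 + Real.exp (xdot x η i)) - y i * xdot x η i))
      + a * ((1 / (n : ℝ)) * ∑ i, (Real.log (1 + Real.exp (xdot x ζ i)) - y i * xdot x ζ i))
      = (1 / (n : ℝ)) * ∑ i, ((1 - a) * (Real.log (1 + Real.exp (xdot x η i)) - y i * xdot x η i)
          + a * (Real.log (1 + Real.exp (xdot x ζ i)) - y i * xdot x ζ i)) := by
    rw [Finset.sum_add_distrib, ← Finset.mul_sum, ← Finset.mul_sum]; ring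
  rw [hr]
  refine mul_le_mul_of_nonneg_left (Finset.sum_le_sum fun i _ => ?_) (by positivity)
  rw [xdot_combo]
  have h := ell_convex (xdot x η i) (xdot x ζ i) a ha ha1
  nlinarith [h]

end Sums

end LassoAux

open LassoAux in
lemma sq_rpow_three_halves (x : ℝ) (hx : 0 ≤ x) : ((x ^ 2 : ℝ) : ℝ) ^ ((3 : ℝ) / 2) = x ^ 3 := by
  rw [← Real.rpow_natCast x 2, ← Real.rpow_mul hx]
  norm_num


set_option maxHeartbeats 1000000 in
open LassoAux in
/-- Rate of convergence of the ℓ1-penalized logistic regression estimator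
(Lemma B.5): with `λ/n ≥ c‖∇Λ(η₀)‖_∞`, `c > 1`, `c̄ = (c+1)/(c−1)`, a weighted
restricted eigenvalue `κ` and a nonlinear impact coefficient `q̄` over the cone
`Δ_c̄`, with `q̄ > 3(1+1/c)λ√s/(nκ)`, any global minimizer `η̂` of the
ℓ1-penalized logistic criterion satisfies
`‖√w_i x_i'(η̂−η₀)‖_{2,n} ≤ 3(1+1/c)λ√s/(nκ)` and
`‖η̂−η₀‖₁ ≤ 3((1+c)(1+c̄)/c)λs/(nκ²)`. -/
theorem lasso_logistic_rate {n p : ℕ} (hn : 0 < n) (hp : 0 < p)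
    (x : Fin n → Fin p → ℝ) (y : Fin n → ℝ) (hy : ∀ i, y i = 0 ∨ y i = 1)
    (η₀ : Fin p → ℝ) (hs : 1 ≤ (supp η₀).card)
    (lam c : ℝ) (hlam : 0 < lam) (hc : 1 < c)
    (hpen : c * gradLamSup x y η₀ ≤ lam / (n : ℝ))
    (κ : ℝ) (hκ : 0 < κ)
    (hRE : ∀ δ : Fin p → ℝ, inCone (supp η₀) ((c + 1) / (c - 1)) δ →
      κ * Real.sqrt (∑ j ∈ supp η₀, δ j ^ 2) ≤ predNorm x (wgt x η₀) δ)
    (qbar : ℝ) (hqbar : 0 < qbar)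
    (hq : ∀ δ : Fin p → ℝ, inCone (supp η₀) ((c + 1) / (c - 1)) δ →
      qbar * ((1 / (n : ℝ)) * ∑ i, wgt x η₀ i * |xdot x δ i| ^ 3)
        ≤ ((1 / (n : ℝ)) * ∑ i, wgt x η₀ i * xdot x δ i ^ 2) ^ ((3 : ℝ) / 2))
    (hqlarge : 3 * (1 + 1 / c) * lam * Real.sqrt ((supp η₀).card) / ((n : ℝ) * κ) < qbar)
    (ηhat : Fin p → ℝ)
    (hmin : ∀ η : Fin p → ℝ,
      Lam x y ηhat + (lam / (n : ℝ)) * l1norm ηhat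
        ≤ Lam x y η + (lam / (n : ℝ)) * l1norm η) :
    predNorm x (wgt x η₀) (ηhat - η₀)
        ≤ 3 * (1 + 1 / c) * lam * Real.sqrt ((supp η₀).card) / ((n : ℝ) * κ) ∧
      l1norm (ηhat - η₀)
        ≤ 3 * ((1 + c) * (1 + (c + 1) / (c - 1)) / c) * lam * ((supp η₀).card : ℝ)
            / ((n : ℝ) * κ ^ 2) := by
  have hN : (0 : ℝ) < (n : ℝ) := by exact_mod_cast hn
  have hc0 : (0 : ℝ) < c := by linarith
  have hc1 : (0 : ℝ) < c - 1 := by linarith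
  set N : ℝ := (n : ℝ) with hNdef
  set T : Finset (Fin p) := supp η₀ with hT
  set δ : Fin p → ℝ := ηhat - η₀ with hδ
  have hδap : ∀ j, δ j = ηhat j - η₀ j := fun j => rfl
  set s : ℝ := ((supp η₀).card : ℝ) with hsdef
  rw [hT] at hs
  have hs1 : (1 : ℝ) ≤ s := by rw [hsdef]; exact_mod_cast hs
  set rs : ℝ := Real.sqrt s with hrs
  have hrs0 : 0 < rs := Real.sqrt_pos.mpr (by linarith)
  set ST : ℝ := ∑ j ∈ T, |δ j| with hST
  set SC : ℝ := ∑ j ∈ Tᶜ, |δ j| with hSC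
  have hSTnn : 0 ≤ ST := Finset.sum_nonneg fun j _ => abs_nonneg _
  have hSCnn : 0 ≤ SC := Finset.sum_nonneg fun j _ => abs_nonneg _
  have hl1split : ∀ v : Fin p → ℝ, l1norm v = ∑ j ∈ T, |v j| + ∑ j ∈ Tᶜ, |v j| :=
    fun v => (Finset.sum_add_sum_compl T _).symm
  -- gradient sup-norm bound
  have hsup : gradLamSup x y η₀ ≤ lam / (c * N) := by
    rw [show lam / (c * N) = lam / N / c by rw [div_div, mul_comm]]
    rw [le_div_iff₀ hc0]
    linarith [hpen]
  have hgb : ∀ j, |gradLam x y η₀ j| ≤ lam / (c * N) := by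
    intro j
    refine le_trans ?_ hsup
    exact le_ciSup (f := fun j => |gradLam x y η₀ j|)
      (Set.Finite.bddAbove (Set.finite_range _)) j
  have hdot : ∀ v : Fin p → ℝ,
      |∑ j, gradLam x y η₀ j * v j| ≤ lam / (c * N) * l1norm v := by
    intro v
    calc |∑ j, gradLam x y η₀ j * v j| ≤ ∑ j, |gradLam x y η₀ j * v j| :=
          Finset.abs_sum_le_sum_abs _ _
      _ ≤ ∑ j, lam / (c * N) * |v j| := by
          refine Finset.sum_le_sum fun j _ => ?_
          rw [abs_mul]
          exact mul_le_mul_of_nonneg_right (hgb j) (abs_nonneg _)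
      _ = lam / (c * N) * l1norm v := by rw [l1norm, Finset.mul_sum]
  have hη0c : ∀ j ∈ Tᶜ, η₀ j = 0 := by
    intro j hj
    rw [hT, supp] at hj
    simp only [Finset.mem_compl, Finset.mem_filter, Finset.mem_univ, true_and,
      not_not] at hj
    exact hj
  -- basic inequality for rescaled deviations
  have hbasic : ∀ a : ℝ, 0 ≤ a → a ≤ 1 →
      Lam x y (η₀ + a • δ) - Lam x y η₀ ≤ lam / N * (a * ST - a * SC) := by
    intro a ha ha1
    have hcombo : η₀ + a • δ = (1 - a) • η₀ + a • ηhat := by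
      funext j
      simp only [Pi.add_apply, Pi.smul_apply, smul_eq_mul, hδap]
      ring
    have hLam := lam_convex x y η₀ ηhat a ha ha1
    have hl1c : l1norm ((1 - a) • η₀ + a • ηhat) ≤ (1 - a) * l1norm η₀ + a * l1norm ηhat := by
      simp only [l1norm, Finset.mul_sum, ← Finset.sum_add_distrib]
      refine Finset.sum_le_sum fun j _ => ?_
      simp only [Pi.add_apply, Pi.smul_apply, smul_eq_mul]
      calc |(1 - a) * η₀ j + a * ηhat j| ≤ |(1 - a) * η₀ j| + |a * ηhat j| := abs_add_le _ _
        _ = (1 - a) * |η₀ j| + a * |ηhat j| := by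
            rw [abs_mul, abs_mul, abs_of_nonneg (by linarith : (0:ℝ) ≤ 1 - a), abs_of_nonneg ha]
    have hmin0 := hmin η₀
    have hpnn : (0 : ℝ) ≤ lam / N := by positivity
    have step1 : Lam x y (η₀ + a • δ) + lam / N * l1norm (η₀ + a • δ)
        ≤ Lam x y η₀ + lam / N * l1norm η₀ := by
      rw [hcombo]
      have h2 := mul_le_mul_of_nonneg_left hl1c hpnn
      have h3 := mul_le_mul_of_nonneg_left hmin0 ha
      nlinarith [hLam, h2, h3]
    have step2 : l1norm η₀ - l1norm (η₀ + a • δ) ≤ a * ST - a * SC := by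
      rw [hl1split η₀, hl1split (η₀ + a • δ)]
      have h1 : ∑ j ∈ T, |η₀ j| - ∑ j ∈ T, |(η₀ + a • δ) j| ≤ a * ST := by
        rw [hST, Finset.mul_sum, ← Finset.sum_sub_distrib]
        refine Finset.sum_le_sum fun j _ => ?_
        have h := abs_sub_abs_le_abs_sub (η₀ j) ((η₀ + a • δ) j)
        have he : η₀ j - (η₀ + a • δ) j = -(a * δ j) := by
          simp only [Pi.add_apply, Pi.smul_apply, smul_eq_mul]; ring
        rw [he, abs_neg, abs_mul, abs_of_nonneg ha] at h
        exact h
      have h2 : ∑ j ∈ Tᶜ, |η₀ j| - ∑ j ∈ Tᶜ, |(η₀ + a • δ) j| = -(a * SC) := by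
        have e1 : ∑ j ∈ Tᶜ, |η₀ j| = 0 :=
          Finset.sum_eq_zero fun j hj => by rw [hη0c j hj, abs_zero]
        have e2 : ∑ j ∈ Tᶜ, |(η₀ + a • δ) j| = a * SC := by
          rw [hSC, Finset.mul_sum]
          refine Finset.sum_congr rfl fun j hj => ?_
          rw [Pi.add_apply, Pi.smul_apply, hη0c j hj, zero_add, smul_eq_mul, abs_mul,
            abs_of_nonneg ha]
        rw [e1, e2]; ring
      linarith
    have h4 := mul_le_mul_of_nonneg_left step2 hpnn
    linarith [step1, h4]
  -- cone membership
  have hηδ : η₀ + δ = ηhat := by funext j; simp [hδap]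
  have hcone : SC ≤ (c + 1) / (c - 1) * ST := by
    have hgl := lam_lower_grad x y η₀ δ
    rw [hηδ] at hgl
    have hb := hbasic 1 zero_le_one le_rfl
    rw [one_smul, hηδ] at hb
    have habs := hdot δ
    have hl1δ : l1norm δ = ST + SC := hl1split δ
    rw [hl1δ] at habs
    have key : -(lam / (c * N)) * (ST + SC) ≤ lam / N * (1 * ST - 1 * SC) := by
      have := neg_abs_le (∑ j, gradLam x y η₀ j * δ j)
      linarith
    have e1 : lam / N * (1 * ST - 1 * SC) = lam / (c * N) * (c * (ST - SC)) := by
      field_simp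
    rw [e1] at key
    have hB : (0 : ℝ) < lam / (c * N) := by positivity
    have h5 : -(ST + SC) ≤ c * (ST - SC) := by
      have h6 : lam / (c * N) * (-(ST + SC)) ≤ lam / (c * N) * (c * (ST - SC)) := by
        linarith [key]
      exact (mul_le_mul_iff_of_pos_left hB).mp h6
    rw [div_mul_eq_mul_div, le_div_iff₀ hc1]
    nlinarith [h5]
  have hconeδ : inCone T ((c + 1) / (c - 1)) δ := hcone
  -- Cauchy–Schwarz on T
  have hCS : ST ≤ rs * Real.sqrt (∑ j ∈ T, δ j ^ 2) := by
    have h := Finset.sum_mul_sq_le_sq_mul_sq T (fun _ => (1 : ℝ)) (fun j => |δ j|)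
    simp only [one_pow, one_mul, sq_abs] at h
    have hcard : ∑ _j ∈ T, (1 : ℝ) = s := by
      rw [Finset.sum_const, hsdef, hT]; simp
    rw [hcard] at h
    calc ST = Real.sqrt (ST ^ 2) := (Real.sqrt_sq hSTnn).symm
      _ ≤ Real.sqrt (s * ∑ j ∈ T, δ j ^ 2) := Real.sqrt_le_sqrt (by rw [hST]; exact h)
      _ = rs * Real.sqrt (∑ j ∈ T, δ j ^ 2) := by
          rw [Real.sqrt_mul (by positivity), hrs]
  have hre := hRE δ hconeδ
  set r : ℝ := predNorm x (wgt x η₀) δ with hr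
  have hrnn : 0 ≤ r := Real.sqrt_nonneg _
  set Q : ℝ := (1 / N) * ∑ i, wgt x η₀ i * xdot x δ i ^ 2 with hQ
  have hQnn : 0 ≤ Q := by
    rw [hQ]
    refine mul_nonneg (by positivity) (Finset.sum_nonneg fun i _ => ?_)
    exact mul_nonneg (wfun_nonneg _) (sq_nonneg _)
  have hrQ : r ^ 2 = Q := Real.sq_sqrt hQnn
  have hSTr : κ * ST ≤ rs * r := by
    calc κ * ST ≤ κ * (rs * Real.sqrt (∑ j ∈ T, δ j ^ 2)) :=
          mul_le_mul_of_nonneg_left hCS hκ.le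
      _ = rs * (κ * Real.sqrt (∑ j ∈ T, δ j ^ 2)) := by ring
      _ ≤ rs * r := mul_le_mul_of_nonneg_left hre hrs0.le
  set A : ℝ := (1 + 1 / c) * lam * rs / (N * κ) with hA
  have hApos : 0 < A := by
    rw [hA]
    have h1c : (0:ℝ) < 1 + 1 / c := by positivity
    exact div_pos (mul_pos (mul_pos h1c hlam) hrs0) (mul_pos hN hκ)
  have hq3 : 3 * A < qbar := by
    rw [hA]
    calc 3 * ((1 + 1 / c) * lam * rs / (N * κ))
        = 3 * (1 + 1 / c) * lam * rs / (N * κ) := by ring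
      _ < qbar := hqlarge
  set R : ℝ := (1 / N) * ∑ i, wgt x η₀ i * |xdot x δ i| ^ 3 with hR
  -- the master inequality
  have master : ∀ a : ℝ, 0 ≤ a → a ≤ 1 →
      3 * qbar * (a ^ 2 * r ^ 2) - a ^ 3 * r ^ 3 ≤ 6 * qbar * (a * A * r) := by
    intro a ha ha1
    have hQa : (1 / N) * ∑ i, wgt x η₀ i * xdot x (a • δ) i ^ 2 = a ^ 2 * Q := by
      simp only [xdot_smul]
      rw [hQ]
      rw [show ∑ i, wgt x η₀ i * (a * xdot x δ i) ^ 2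
          = a ^ 2 * ∑ i, wgt x η₀ i * xdot x δ i ^ 2 by
        rw [Finset.mul_sum]; exact Finset.sum_congr rfl fun i _ => by ring]
      ring
    have hRa : (1 / N) * ∑ i, wgt x η₀ i * |xdot x (a • δ) i| ^ 3 = a ^ 3 * R := by
      simp only [xdot_smul]
      rw [hR]
      rw [show ∑ i, wgt x η₀ i * |a * xdot x δ i| ^ 3
          = a ^ 3 * ∑ i, wgt x η₀ i * |xdot x δ i| ^ 3 by
        rw [Finset.mul_sum]
        refine Finset.sum_congr rfl fun i _ => ?_
        rw [abs_mul, abs_of_nonneg ha]; ring]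
      ring
    -- lower bound on Lam difference
    have hlow := lam_lower_key x y η₀ (a • δ)
    have hLHS : (1 / N) * ∑ i, wgt x η₀ i *
        ((xdot x (a • δ) i) ^ 2 / 2 - |xdot x (a • δ) i| ^ 3 / 6)
        = a ^ 2 * Q / 2 - a ^ 3 * R / 6 := by
      rw [show ∑ i, wgt x η₀ i * ((xdot x (a • δ) i) ^ 2 / 2 - |xdot x (a • δ) i| ^ 3 / 6)
          = (∑ i, wgt x η₀ i * xdot x (a • δ) i ^ 2) / 2
            - (∑ i, wgt x η₀ i * |xdot x (a • δ) i| ^ 3) / 6 by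
        rw [Finset.sum_div, Finset.sum_div, ← Finset.sum_sub_distrib]
        exact Finset.sum_congr rfl fun i _ => by ring]
      have := hQa; have := hRa
      rw [mul_sub]
      rw [show (1 / N) * ((∑ i, wgt x η₀ i * xdot x (a • δ) i ^ 2) / 2)
          = ((1 / N) * ∑ i, wgt x η₀ i * xdot x (a • δ) i ^ 2) / 2 by ring]
      rw [show (1 / N) * ((∑ i, wgt x η₀ i * |xdot x (a • δ) i| ^ 3) / 6)
          = ((1 / N) * ∑ i, wgt x η₀ i * |xdot x (a • δ) i| ^ 3) / 6 by ring]
      rw [hQa, hRa]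
    rw [hLHS] at hlow
    -- upper bound chain
    have hup := hbasic a ha ha1
    have hd := hdot (a • δ)
    have hl1s : l1norm (a • δ) = a * (ST + SC) := by
      rw [show l1norm (a • δ) = a * l1norm δ by
        rw [l1norm, l1norm, Finset.mul_sum]
        refine Finset.sum_congr rfl fun j _ => ?_
        rw [Pi.smul_apply, smul_eq_mul, abs_mul, abs_of_nonneg ha]]
      rw [hl1split δ]
    rw [hl1s] at hd
    have hub : a ^ 2 * Q / 2 - a ^ 3 * R / 6
        ≤ lam / N * (a * ST - a * SC) + lam / (c * N) * (a * (ST + SC)) := by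
      have hnegd := neg_abs_le (∑ j, gradLam x y η₀ j * (a • δ) j)
      linarith [hlow, hup, hd, hnegd]
    have hdrop : lam / N * (a * ST - a * SC) + lam / (c * N) * (a * (ST + SC))
        ≤ a * ((1 + 1 / c) * (lam / N)) * ST := by
      have e1 : lam / (c * N) = (1 / c) * (lam / N) := by
        rw [div_mul_eq_div_div, div_div]; ring_nf
      rw [e1]
      have h1c : 1 / c ≤ 1 := by
        rw [div_le_one hc0]; linarith
      have h2 : 0 ≤ a * SC * (lam / N) * (1 - 1 / c) := by
        have : (0:ℝ) ≤ 1 - 1 / c := by linarith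
        positivity
      nlinarith [h2]
    have hSTb : a * ((1 + 1 / c) * (lam / N)) * ST ≤ a * A * r := by
      have h1 : ST ≤ rs * r / κ := by
        rw [le_div_iff₀ hκ]; linarith [hSTr]
      have h2 : a * ((1 + 1 / c) * (lam / N)) * ST
          ≤ a * ((1 + 1 / c) * (lam / N)) * (rs * r / κ) := by
        refine mul_le_mul_of_nonneg_left h1 ?_
        have : (0:ℝ) < 1 + 1 / c := by positivity
        positivity
      refine le_trans h2 (le_of_eq ?_)
      rw [hA]; field_simp
    -- qbar bound
    have hconea : inCone T ((c + 1) / (c - 1)) (a • δ) := by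
      show ∑ j ∈ Tᶜ, |(a • δ) j| ≤ (c + 1) / (c - 1) * ∑ j ∈ T, |(a • δ) j|
      simp only [Pi.smul_apply, smul_eq_mul, abs_mul, abs_of_nonneg ha, ← Finset.mul_sum]
      rw [← hST, ← hSC]
      calc a * SC ≤ a * ((c + 1) / (c - 1) * ST) := mul_le_mul_of_nonneg_left hcone ha
        _ = (c + 1) / (c - 1) * (a * ST) := by ring
    have hq' := hq (a • δ) hconea
    rw [hQa, hRa] at hq'
    have har : a ^ 2 * Q = (a * r) ^ 2 := by rw [← hrQ]; ring
    rw [har, sq_rpow_three_halves (a * r) (mul_nonneg ha hrnn)] at hq'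
    -- combine
    have hfinal : a ^ 2 * Q / 2 - a ^ 3 * R / 6 ≤ a * A * r := le_trans hub
      (le_trans hdrop hSTb)
    calc 3 * qbar * (a ^ 2 * r ^ 2) - a ^ 3 * r ^ 3
        ≤ 3 * qbar * (a ^ 2 * r ^ 2) - qbar * (a ^ 3 * R) := by linarith [hq']
      _ = 6 * qbar * (a ^ 2 * Q / 2 - a ^ 3 * R / 6) := by rw [← hrQ]; ring
      _ ≤ 6 * qbar * (a * A * r) :=
          mul_le_mul_of_nonneg_left hfinal (by positivity)
  -- conclusion 1
  have hcon1 : r ≤ 3 * A := by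
    by_contra hcontra
    push_neg at hcontra
    have hrpos : 0 < r := lt_trans (by positivity) hcontra
    set a : ℝ := 3 * A / r with ha
    have ha0 : 0 ≤ a := by positivity
    have ha1 : a ≤ 1 := by
      rw [ha, div_le_one hrpos]; linarith
    have hm := master a ha0 ha1
    have hare : a * r = 3 * A := by
      rw [ha]; field_simp
    have e2 : a ^ 2 * r ^ 2 = 9 * A ^ 2 := by
      linear_combination (a * r + 3 * A) * hare
    have e3 : a ^ 3 * r ^ 3 = 27 * A ^ 3 := by
      linear_combination (a ^ 2 * r ^ 2 + 3 * A * (a * r) + 9 * A ^ 2) * hare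
    have e4 : a * A * r = 3 * A * A := by
      rw [show a * A * r = A * (a * r) by ring, hare]; ring
    rw [e2, e3, e4] at hm
    linarith [hm, mul_pos (sub_pos.mpr hq3) (mul_pos hApos hApos)]
  constructor
  · calc predNorm x (wgt x η₀) δ = r := by rw [hr]
      _ ≤ 3 * A := hcon1
      _ = 3 * (1 + 1 / c) * lam * rs / (N * κ) := by rw [hA]; ring
  · -- ℓ1 bound
    have hl1δ : l1norm δ = ST + SC := hl1split δ
    have h1 : l1norm δ ≤ (1 + (c + 1) / (c - 1)) * ST := by
      rw [hl1δ]; linarith [hcone]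
    have h2 : ST ≤ rs * (3 * A) / κ := by
      rw [le_div_iff₀ hκ]
      calc ST * κ = κ * ST := by ring
        _ ≤ rs * r := hSTr
        _ ≤ rs * (3 * A) := mul_le_mul_of_nonneg_left hcon1 hrs0.le
    have hss : rs * rs = s := Real.mul_self_sqrt (by linarith : (0:ℝ) ≤ s)
    have h3 : (1 + (c + 1) / (c - 1)) * (rs * (3 * A) / κ)
        = 3 * ((1 + c) * (1 + (c + 1) / (c - 1)) / c) * lam * s / (N * κ ^ 2) := by
      rw [hA, ← hss]
      field_simp
      ring
    calc l1norm δ ≤ (1 + (c + 1) / (c - 1)) * ST := h1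
      _ ≤ (1 + (c + 1) / (c - 1)) * (rs * (3 * A) / κ) := by
          refine mul_le_mul_of_nonneg_left h2 ?_
          have : (0:ℝ) < (c + 1) / (c - 1) := by positivity
          linarith
      _ = 3 * ((1 + c) * (1 + (c + 1) / (c - 1)) / c) * lam * s / (N * κ ^ 2) := h3
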